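/- arXiv:0910.5451 — 3 statements merged into one kernel-verified Lean document; each statement's English description precedes it below -/
import Mathlib

section
/- Let N ≥ 1, let z₀ ∈ ℂ with Re z₀ > 0, and let t_n > 0 be a sequence of positive reals. Let (u_n, v_n) and (ũ_n, ṽ_n) be sequences in H^N such that u_n/t_n → z₀, ũ_n/t_n → z₀, ‖v_n‖²/t_n → 0 and ‖ṽ_n‖²/t_n → 0 as n → ∞. Then the pseudo-hyperbolic distance d((u_n,v_n),(ũ_n,ṽ_n)) → 0 as n → ∞. -/
noncomputable section

open Filter Topology

/-- The Siegel domain `H^N = {(z,w) ∈ ℂ × ℂ^{N−1} : Re z > ‖w‖²}` (here `n = N − 1`). -/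
def siegel (n : ℕ) : Set (ℂ × EuclideanSpace ℂ (Fin n)) := {Z | ‖Z.2‖ ^ 2 < Z.1.re}

/-- The height `t(z,w) = Re z − ‖w‖²` of a point of the Siegel domain. -/
def ht {n : ℕ} (Z : ℂ × EuclideanSpace ℂ (Fin n)) : ℝ := Z.1.re - ‖Z.2‖ ^ 2

/-- The Hermitian inner product `⟨w,w̃⟩ = Σ_j w_j * conj (w̃_j)` of the paper
(which is `inner w̃ w` in Mathlib's conjugate-linear-in-the-first-slot convention). -/
def hip' {n : ℕ} (w w' : EuclideanSpace ℂ (Fin n)) : ℂ := inner ℂ w' w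

/-- The pseudo-hyperbolic distance on the Siegel domain: the number `d ∈ [0,1)` with
`d² = 1 − 4·t(z,w)·t(z̃,w̃)/|z + conj z̃ − 2⟨w,w̃⟩|²`. -/
def sphd {n : ℕ} (Z W : ℂ × EuclideanSpace ℂ (Fin n)) : ℝ :=
  Real.sqrt (1 - 4 * ht Z * ht W / ‖Z.1 + (starRingEnd ℂ) W.1 - 2 * hip' Z.2 W.2‖ ^ 2)

/-- if `(u_n,v_n)` and `(ũ_n,ṽ_n)` are sequences in the Siegel domain with
`u_n/t_n → z₀`, `ũ_n/t_n → z₀` (where `Re z₀ > 0`) and `‖v_n‖²/t_n → 0`, `‖ṽ_n‖²/t_n → 0`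
for some positive reals `t_n`, then the pseudo-hyperbolic distance between them tends
to `0`. -/
theorem stmt13 {n : ℕ} (z₀ : ℂ) (hz₀ : 0 < z₀.re)
    (t : ℕ → ℝ) (htpos : ∀ k, 0 < t k)
    (U V : ℕ → ℂ × EuclideanSpace ℂ (Fin n))
    (hU : ∀ k, U k ∈ siegel n) (hV : ∀ k, V k ∈ siegel n)
    (hu : Tendsto (fun k => (U k).1 / (t k : ℂ)) atTop (𝓝 z₀))
    (hv : Tendsto (fun k => (V k).1 / (t k : ℂ)) atTop (𝓝 z₀))
    (hu2 : Tendsto (fun k => ‖(U k).2‖ ^ 2 / t k) atTop (𝓝 0))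
    (hv2 : Tendsto (fun k => ‖(V k).2‖ ^ 2 / t k) atTop (𝓝 0)) :
    Tendsto (fun k => sphd (U k) (V k)) atTop (𝓝 0) := by
  have htne : ∀ k, ((t k : ℝ) : ℂ) ≠ 0 := fun k => by
    exact_mod_cast Complex.ofReal_ne_zero.2 (htpos k).ne'
  -- heights divided by t
  have hHU : Tendsto (fun k => ht (U k) / t k) atTop (𝓝 z₀.re) := by
    have heq : (fun k => ht (U k) / t k)
        = fun k => ((U k).1 / (t k : ℂ)).re - ‖(U k).2‖ ^ 2 / t k := by
      funext k; simp [ht, sub_div, Complex.div_ofReal_re]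
    rw [heq]
    simpa using ((Complex.continuous_re.continuousAt.tendsto.comp hu).sub hu2)
  have hHV : Tendsto (fun k => ht (V k) / t k) atTop (𝓝 z₀.re) := by
    have heq : (fun k => ht (V k) / t k)
        = fun k => ((V k).1 / (t k : ℂ)).re - ‖(V k).2‖ ^ 2 / t k := by
      funext k; simp [ht, sub_div, Complex.div_ofReal_re]
    rw [heq]
    simpa using ((Complex.continuous_re.continuousAt.tendsto.comp hv).sub hv2)
  -- inner product divided by t tends to 0
  have hip0 : Tendsto (fun k => hip' (U k).2 (V k).2 / ((t k : ℝ) : ℂ)) atTop (𝓝 0) := by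
    rw [tendsto_zero_iff_norm_tendsto_zero]
    apply squeeze_zero (g := fun k => Real.sqrt (‖(U k).2‖ ^ 2 / t k * (‖(V k).2‖ ^ 2 / t k)))
      (fun k => norm_nonneg _)
    · intro k
      have h1 : ‖hip' (U k).2 (V k).2‖ ≤ ‖(U k).2‖ * ‖(V k).2‖ := by
        simpa [hip', mul_comm] using norm_inner_le_norm (𝕜 := ℂ) (V k).2 (U k).2
      have h2 : Real.sqrt (‖(U k).2‖ ^ 2 / t k * (‖(V k).2‖ ^ 2 / t k))
          = ‖(U k).2‖ * ‖(V k).2‖ / t k := by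
        have : ‖(U k).2‖ ^ 2 / t k * (‖(V k).2‖ ^ 2 / t k)
            = (‖(U k).2‖ * ‖(V k).2‖ / t k) ^ 2 := by
          field_simp
        rw [this, Real.sqrt_sq (div_nonneg (by positivity) (htpos k).le)]
      rw [h2, norm_div]
      have h3 : ‖((t k : ℝ) : ℂ)‖ = t k := by
        simp [Complex.norm_real, abs_of_pos (htpos k)]
      rw [h3]
      gcongr
      exact (htpos k).le
    · have := hu2.mul hv2
      have h0 : Tendsto (fun k => Real.sqrt (‖(U k).2‖ ^ 2 / t k * (‖(V k).2‖ ^ 2 / t k)))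
          atTop (𝓝 (Real.sqrt 0)) :=
        (Real.continuous_sqrt.continuousAt.tendsto).comp (by simpa using this)
      simpa using h0
  -- numerator divided by t
  have hnum : Tendsto (fun k =>
      ((U k).1 + (starRingEnd ℂ) (V k).1 - 2 * hip' (U k).2 (V k).2) / ((t k : ℝ) : ℂ))
      atTop (𝓝 (z₀ + (starRingEnd ℂ) z₀)) := by
    have heq : (fun k =>
        ((U k).1 + (starRingEnd ℂ) (V k).1 - 2 * hip' (U k).2 (V k).2) / ((t k : ℝ) : ℂ))
        = fun k => (U k).1 / ((t k : ℝ) : ℂ) + (starRingEnd ℂ) ((V k).1 / ((t k : ℝ) : ℂ))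
          - 2 * (hip' (U k).2 (V k).2 / ((t k : ℝ) : ℂ)) := by
      funext k
      rw [sub_div, add_div, map_div₀]
      simp [Complex.conj_ofReal, mul_div_assoc]
    rw [heq]
    have hconj : Tendsto (fun k => (starRingEnd ℂ) ((V k).1 / ((t k : ℝ) : ℂ))) atTop
        (𝓝 ((starRingEnd ℂ) z₀)) :=
      (Complex.continuous_conj.continuousAt.tendsto).comp hv
    simpa using (hu.add hconj).sub (tendsto_const_nhds.mul hip0)
  -- norm squared of numerator / t
  have hz2 : ‖z₀ + (starRingEnd ℂ) z₀‖ ^ 2 = (2 * z₀.re) ^ 2 := by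
    rw [Complex.add_conj, Complex.norm_real, Real.norm_eq_abs, sq_abs]
  have hnormsq : Tendsto (fun k =>
      ‖((U k).1 + (starRingEnd ℂ) (V k).1 - 2 * hip' (U k).2 (V k).2) / ((t k : ℝ) : ℂ)‖ ^ 2)
      atTop (𝓝 ((2 * z₀.re) ^ 2)) := by
    rw [← hz2]
    exact ((continuous_norm.continuousAt.tendsto).comp hnum).pow 2
  -- the full fraction tends to 1
  have hf : Tendsto (fun k => 4 * ht (U k) * ht (V k)
      / ‖(U k).1 + (starRingEnd ℂ) (V k).1 - 2 * hip' (U k).2 (V k).2‖ ^ 2) atTop (𝓝 1) := by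
    have key : ∀ k, 4 * (ht (U k) / t k) * (ht (V k) / t k)
          / ‖((U k).1 + (starRingEnd ℂ) (V k).1 - 2 * hip' (U k).2 (V k).2) / ((t k : ℝ) : ℂ)‖ ^ 2
        = 4 * ht (U k) * ht (V k)
          / ‖(U k).1 + (starRingEnd ℂ) (V k).1 - 2 * hip' (U k).2 (V k).2‖ ^ 2 := by
      intro k
      have h3 : ‖((t k : ℝ) : ℂ)‖ = t k := by
        simp [Complex.norm_real, abs_of_pos (htpos k)]
      have ht' : t k ≠ 0 := (htpos k).ne'
      rw [norm_div, h3, div_pow, div_div_eq_mul_div]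
      congr 1
      field_simp
    have hden_ne : (2 * z₀.re) ^ 2 ≠ 0 := by positivity
    have hcomb : Tendsto (fun k => 4 * (ht (U k) / t k) * (ht (V k) / t k)
        / ‖((U k).1 + (starRingEnd ℂ) (V k).1 - 2 * hip' (U k).2 (V k).2) / ((t k : ℝ) : ℂ)‖ ^ 2)
        atTop (𝓝 (4 * z₀.re * z₀.re / (2 * z₀.re) ^ 2)) :=
      ((tendsto_const_nhds.mul hHU).mul hHV).div hnormsq hden_ne
    have hval : 4 * z₀.re * z₀.re / (2 * z₀.re) ^ 2 = 1 := by
      field_simp; ring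
    rw [hval] at hcomb
    exact hcomb.congr key
  -- conclude
  have h1 : Tendsto (fun k => 1 - (4 * ht (U k) * ht (V k)
      / ‖(U k).1 + (starRingEnd ℂ) (V k).1 - 2 * hip' (U k).2 (V k).2‖ ^ 2)) atTop (𝓝 0) := by
    simpa using (tendsto_const_nhds (x := (1:ℝ))).sub hf
  have h2 : Tendsto (fun k => sphd (U k) (V k)) atTop (𝓝 (Real.sqrt 0)) := by
    exact (Real.continuous_sqrt.continuousAt.tendsto).comp h1
  simpa using h2
end
end

section
/- Let f : ℂ² → ℂ² be a quadratic polynomial map fixing the origin, i.e. f(z,w) = (a₁z + a₂w + a₃z² + a₄zw + a₅w², b₁z + b₂w + b₃z² + b₄zw + b₅w²) for some complex coefficients a₁,…,a₅, b₁,…,b₅. Then f(H²) ⊆ H² if and only if there exist a real number A > 0 and complex numbers B, C with A − |B| ≥ |C|² such that f(z,w) = (Az + Bw², Cw) for all (z,w) ∈ ℂ². -/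
open Filter Topology

set_option maxHeartbeats 1000000
noncomputable section

lemma cont_nonneg {g : ℝ → ℝ} (hg : Continuous g) (h : ∀ t : ℝ, 0 < t → 0 ≤ g t) :
    0 ≤ g 0 := by
  have h1 : Tendsto g (𝓝[>] (0:ℝ)) (𝓝 (g 0)) :=
    (hg.tendsto 0).mono_left nhdsWithin_le_nhds
  exact ge_of_tendsto h1 (eventually_nhdsWithin_of_forall h)

lemma poly_low1 (c1 c2 c3 c4 c5 c6 : ℝ)
    (h : ∀ t : ℝ, 0 < t →
      0 ≤ c1*t + c2*t^2 + c3*t^3 + c4*t^4 + c5*t^5 + c6*t^6) : 0 ≤ c1 := by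
  have hg : Continuous fun t : ℝ => c1 + c2*t + c3*t^2 + c4*t^3 + c5*t^4 + c6*t^5 := by
    continuity
  have := cont_nonneg hg (fun t ht => by nlinarith [h t ht])
  simpa using this

lemma poly_high (c1 c2 c3 c4 c5 c6 : ℝ)
    (h : ∀ t : ℝ, 0 < t →
      0 ≤ c1*t + c2*t^2 + c3*t^3 + c4*t^4 + c5*t^5 + c6*t^6) : 0 ≤ c6 := by
  apply poly_low1 c6 c5 c4 c3 c2 c1
  intro s hs
  have h1 := h (1/s) (by positivity)
  have key : (c1*(1/s) + c2*(1/s)^2 + c3*(1/s)^3 + c4*(1/s)^4 + c5*(1/s)^5 + c6*(1/s)^6) * s^7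
      = c6*s + c5*s^2 + c4*s^3 + c3*s^4 + c2*s^5 + c1*s^6 := by
    field_simp; ring
  have h2 : 0 ≤ (c1*(1/s) + c2*(1/s)^2 + c3*(1/s)^3 + c4*(1/s)^4 + c5*(1/s)^5 + c6*(1/s)^6) * s^7 :=
    mul_nonneg h1 (by positivity)
  rw [key] at h2; exact h2

lemma eqz (c : ℂ) (h : c.re^2 + c.im^2 ≤ 0) : c = 0 := by
  have h1 : Complex.normSq c ≤ 0 := by rw [Complex.normSq_apply]; nlinarith
  exact Complex.normSq_eq_zero.mp (le_antisymm h1 (Complex.normSq_nonneg _))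

/-- The two-dimensional Siegel domain `H² = {(z,w) ∈ ℂ² : Re z > |w|²}`. -/
def siegel2 : Set (ℂ × ℂ) := {Z | ‖Z.2‖ ^ 2 < Z.1.re}

/-- a quadratic polynomial self-map of `ℂ²` fixing the origin maps `H²`
into itself if and only if it has the form `f(z,w) = (Az + Bw², Cw)` with `A` real,
`A > 0` and `A − |B| ≥ |C|²`. -/
theorem stmt16 (f : ℂ × ℂ → ℂ × ℂ) (a₁ a₂ a₃ a₄ a₅ b₁ b₂ b₃ b₄ b₅ : ℂ)
    (hf : ∀ z w : ℂ, f (z, w) =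
      (a₁ * z + a₂ * w + a₃ * z ^ 2 + a₄ * z * w + a₅ * w ^ 2,
       b₁ * z + b₂ * w + b₃ * z ^ 2 + b₄ * z * w + b₅ * w ^ 2)) :
    (∀ Z ∈ siegel2, f Z ∈ siegel2) ↔
    ∃ (A : ℝ) (B C : ℂ), 0 < A ∧ ‖C‖ ^ 2 ≤ A - ‖B‖ ∧
      ∀ z w : ℂ, f (z, w) = ((A : ℂ) * z + B * w ^ 2, C * w) := by
  constructor
  · intro h
    -- strict interior condition
    have H : ∀ z w : ℂ, ‖w‖^2 < z.re →
        ‖b₁ * z + b₂ * w + b₃ * z ^ 2 + b₄ * z * w + b₅ * w ^ 2‖^2 <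
        (a₁ * z + a₂ * w + a₃ * z ^ 2 + a₄ * z * w + a₅ * w ^ 2).re := by
      intro z w hzw
      have := h (z, w) (by simpa [siegel2] using hzw)
      rw [hf] at this
      simpa [siegel2] using this
    -- closure condition
    have Q : ∀ z w : ℂ, ‖w‖^2 ≤ z.re →
        ‖b₁ * z + b₂ * w + b₃ * z ^ 2 + b₄ * z * w + b₅ * w ^ 2‖^2 ≤
        (a₁ * z + a₂ * w + a₃ * z ^ 2 + a₄ * z * w + a₅ * w ^ 2).re := by
      intro z w hzw
      have hg : Continuous fun t : ℝ =>
          (a₁ * (z + t) + a₂ * w + a₃ * (z + t) ^ 2 + a₄ * (z + t) * w + a₅ * w ^ 2).re -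
          ‖b₁ * (z + t) + b₂ * w + b₃ * (z + t) ^ 2 + b₄ * (z + t) * w + b₅ * w ^ 2‖^2 := by
        fun_prop
      have hq := cont_nonneg hg (fun t ht => by
        have hlt : ‖w‖^2 < (z + t).re := by
          simp only [Complex.add_re, Complex.ofReal_re]; linarith
        linarith [H (z + t) w hlt])
      simp only [Complex.ofReal_zero, add_zero] at hq
      linarith
    -- real-coordinate closure condition
    have QR : ∀ x y u v : ℝ, u^2 + v^2 ≤ x →
        (b₁.re*x - b₁.im*y + b₂.re*u - b₂.im*v + b₃.re*(x^2-y^2) - b₃.im*(2*x*y)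
          + b₄.re*(x*u-y*v) - b₄.im*(x*v+y*u) + b₅.re*(u^2-v^2) - b₅.im*(2*u*v))^2 +
        (b₁.re*y + b₁.im*x + b₂.re*v + b₂.im*u + b₃.re*(2*x*y) + b₃.im*(x^2-y^2)
          + b₄.re*(x*v+y*u) + b₄.im*(x*u-y*v) + b₅.re*(2*u*v) + b₅.im*(u^2-v^2))^2 ≤
        a₁.re*x - a₁.im*y + a₂.re*u - a₂.im*v + a₃.re*(x^2-y^2) - a₃.im*(2*x*y)
          + a₄.re*(x*u-y*v) - a₄.im*(x*v+y*u) + a₅.re*(u^2-v^2) - a₅.im*(2*u*v) := by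
      intro x y u v hb
      have hb' : ‖(u : ℂ) + v * Complex.I‖^2 ≤ ((x : ℂ) + y * Complex.I).re := by
        rw [Complex.sq_norm, Complex.normSq_apply]
        simp only [Complex.add_re, Complex.add_im, Complex.mul_re, Complex.mul_im,
          Complex.I_re, Complex.I_im, Complex.ofReal_re, Complex.ofReal_im]
        nlinarith [hb]
      have hq := Q ((x : ℂ) + y * Complex.I) ((u : ℂ) + v * Complex.I) hb'
      rw [Complex.sq_norm, Complex.normSq_apply] at hq
      simp only [pow_two, Complex.add_re, Complex.add_im, Complex.mul_re, Complex.mul_im,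
        Complex.I_re, Complex.I_im, Complex.ofReal_re, Complex.ofReal_im] at hq
      ring_nf at hq ⊢; linarith [hq]

    -- Step 1: b₃ = 0
    have hb3 : b₃ = 0 := by
      apply eqz
      have h4 := poly_high 0 0 (a₁.re) (a₃.re - b₁.re^2 - b₁.im^2)
          (-(2*(b₁.re*b₃.re)) - 2*(b₁.im*b₃.im)) (-(b₃.re^2) - b₃.im^2)
          (fun t ht => by
            have hq := QR t 0 0 0 (by nlinarith)
            have h2 := mul_nonneg (pow_nonneg ht.le 2) (sub_nonneg.mpr hq)
            ring_nf at h2 ⊢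
            linarith)
      linarith
    -- Step 2: a₃.re ≥ ‖b₁‖²
    have hS2 : 0 ≤ a₃.re - b₁.re^2 - b₁.im^2 := by
      have h4 := poly_high 0 0 0 0 (a₁.re) (a₃.re - b₁.re^2 - b₁.im^2)
          (fun t ht => by
            have hq := QR t 0 0 0 (by nlinarith)
            simp only [hb3, Complex.zero_re, Complex.zero_im, zero_mul, mul_zero,
              add_zero, zero_add, sub_zero, neg_zero] at hq
            have h2 := mul_nonneg (pow_nonneg ht.le 4) (sub_nonneg.mpr hq)
            ring_nf at h2 ⊢
            linarith)
      linarith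
    -- Step 3/4/5: z = ± i t
    have hS3 : 0 ≤ -a₁.im := by
      apply poly_low1 (-a₁.im) (-a₃.re - b₁.re^2 - b₁.im^2) 0 0 0 0
      intro t ht
      have hq := QR 0 t 0 0 (by nlinarith)
      simp only [hb3, Complex.zero_re, Complex.zero_im, zero_mul, mul_zero,
        add_zero, zero_add, sub_zero, neg_zero] at hq
      ring_nf at hq ⊢
      linarith
    have hS4 : 0 ≤ -a₃.re - b₁.re^2 - b₁.im^2 := by
      have h4 := poly_high 0 0 0 0 (-a₁.im) (-a₃.re - b₁.re^2 - b₁.im^2)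
          (fun t ht => by
            have hq := QR 0 t 0 0 (by nlinarith)
            simp only [hb3, Complex.zero_re, Complex.zero_im, zero_mul, mul_zero,
              add_zero, zero_add, sub_zero, neg_zero] at hq
            have h2 := mul_nonneg (pow_nonneg ht.le 4) (sub_nonneg.mpr hq)
            ring_nf at h2 ⊢
            linarith)
      linarith
    have hS5 : 0 ≤ a₁.im := by
      apply poly_low1 (a₁.im) (-a₃.re - b₁.re^2 - b₁.im^2) 0 0 0 0
      intro t ht
      have hq := QR 0 (-t) 0 0 (by nlinarith)
      simp only [hb3, Complex.zero_re, Complex.zero_im, zero_mul, mul_zero,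
        add_zero, zero_add, sub_zero, neg_zero] at hq
      ring_nf at hq ⊢
      linarith
    have ha1i : a₁.im = 0 := le_antisymm (by linarith) hS5
    have ha3r : a₃.re = 0 := by nlinarith [sq_nonneg b₁.re, sq_nonneg b₁.im]
    have hb1 : b₁ = 0 := eqz _ (by nlinarith)
    -- Step 6/7: z = t(1 ± i)
    have hS6 : 0 ≤ -(2*a₃.im) := by
      have h4 := poly_high 0 0 0 0 (a₁.re) (-(2*a₃.im))
          (fun t ht => by
            have hq := QR t t 0 0 (by nlinarith)
            simp only [hb3, hb1, ha1i, ha3r, Complex.zero_re, Complex.zero_im, zero_mul,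
              mul_zero, add_zero, zero_add, sub_zero, neg_zero] at hq
            have h2 := mul_nonneg (pow_nonneg ht.le 4) (sub_nonneg.mpr hq)
            ring_nf at h2 ⊢
            linarith)
      linarith
    have hS7 : 0 ≤ 2*a₃.im := by
      have h4 := poly_high 0 0 0 0 (a₁.re) (2*a₃.im)
          (fun t ht => by
            have hq := QR t (-t) 0 0 (by nlinarith)
            simp only [hb3, hb1, ha1i, ha3r, Complex.zero_re, Complex.zero_im, zero_mul,
              mul_zero, add_zero, zero_add, sub_zero, neg_zero] at hq
            have h2 := mul_nonneg (pow_nonneg ht.le 4) (sub_nonneg.mpr hq)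
            ring_nf at h2 ⊢
            linarith)
      linarith
    have ha3 : a₃ = 0 := eqz _ (by nlinarith)
    -- a₁.re > 0
    have ha1pos : 0 < a₁.re := by
      have := H 1 0 (by simp)
      simp [hb1, hb3, ha3] at this
      simpa using this
    -- Step 9: a₂ = 0, b₄ = 0  (z = t², w = t·u)
    have hS9a : 0 ≤ a₂.re := by
      apply poly_low1 (a₂.re) (a₁.re + a₅.re - b₂.re^2 - b₂.im^2)
        (a₄.re - 2*(b₂.re*b₅.re) - 2*(b₂.im*b₅.im))
        (-(2*(b₂.re*b₄.re)) - 2*(b₂.im*b₄.im) - b₅.re^2 - b₅.im^2)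
        (-(2*(b₄.re*b₅.re)) - 2*(b₄.im*b₅.im)) (-(b₄.re^2) - b₄.im^2)
      intro t ht
      have hq := QR (t^2) 0 t 0 (by nlinarith)
      simp only [hb3, hb1, ha1i, ha3, Complex.zero_re, Complex.zero_im, zero_mul,
        mul_zero, add_zero, zero_add, sub_zero, neg_zero] at hq
      ring_nf at hq ⊢
      linarith
    have hb4 : b₄ = 0 := by
      apply eqz
      have h4 := poly_high (a₂.re) (a₁.re + a₅.re - b₂.re^2 - b₂.im^2)
        (a₄.re - 2*(b₂.re*b₅.re) - 2*(b₂.im*b₅.im))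
        (-(2*(b₂.re*b₄.re)) - 2*(b₂.im*b₄.im) - b₅.re^2 - b₅.im^2)
        (-(2*(b₄.re*b₅.re)) - 2*(b₄.im*b₅.im)) (-(b₄.re^2) - b₄.im^2)
        (fun t ht => by
          have hq := QR (t^2) 0 t 0 (by nlinarith)
          simp only [hb3, hb1, ha1i, ha3, Complex.zero_re, Complex.zero_im, zero_mul,
            mul_zero, add_zero, zero_add, sub_zero, neg_zero] at hq
          ring_nf at hq ⊢
          linarith)
      linarith
    have hS10 : 0 ≤ -a₂.re := by
      apply poly_low1 (-a₂.re) (a₁.re + a₅.re - b₂.re^2 - b₂.im^2)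
        (-a₄.re + 2*(b₂.re*b₅.re) + 2*(b₂.im*b₅.im))
        (-(b₅.re^2) - b₅.im^2) 0 0
      intro t ht
      have hq := QR (t^2) 0 (-t) 0 (by nlinarith)
      simp only [hb3, hb1, hb4, ha1i, ha3, Complex.zero_re, Complex.zero_im, zero_mul,
        mul_zero, add_zero, zero_add, sub_zero, neg_zero] at hq
      ring_nf at hq ⊢
      linarith
    have hS11 : 0 ≤ -a₂.im := by
      apply poly_low1 (-a₂.im) (a₁.re - a₅.re - b₂.re^2 - b₂.im^2)
        (-a₄.im - 2*(b₂.im*b₅.re) + 2*(b₂.re*b₅.im))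
        (-(b₅.re^2) - b₅.im^2) 0 0
      intro t ht
      have hq := QR (t^2) 0 0 t (by nlinarith)
      simp only [hb3, hb1, hb4, ha1i, ha3, Complex.zero_re, Complex.zero_im, zero_mul,
        mul_zero, add_zero, zero_add, sub_zero, neg_zero] at hq
      ring_nf at hq ⊢
      linarith
    have hS12 : 0 ≤ a₂.im := by
      apply poly_low1 (a₂.im) (a₁.re - a₅.re - b₂.re^2 - b₂.im^2)
        (a₄.im + 2*(b₂.im*b₅.re) - 2*(b₂.re*b₅.im))
        (-(b₅.re^2) - b₅.im^2) 0 0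
      intro t ht
      have hq := QR (t^2) 0 0 (-t) (by nlinarith)
      simp only [hb3, hb1, hb4, ha1i, ha3, Complex.zero_re, Complex.zero_im, zero_mul,
        mul_zero, add_zero, zero_add, sub_zero, neg_zero] at hq
      ring_nf at hq ⊢
      linarith
    have ha2 : a₂ = 0 := eqz _ (by nlinarith)
    -- Step 13: b₅ = 0
    have hb5 : b₅ = 0 := by
      apply eqz
      have h4 := poly_high 0 0 0 (a₁.re + a₅.re - b₂.re^2 - b₂.im^2)
        (a₄.re - 2*(b₂.re*b₅.re) - 2*(b₂.im*b₅.im)) (-(b₅.re^2) - b₅.im^2)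
        (fun t ht => by
          have hq := QR (t^2) 0 t 0 (by nlinarith)
          simp only [hb3, hb1, hb4, ha1i, ha2, ha3, Complex.zero_re, Complex.zero_im,
            zero_mul, mul_zero, add_zero, zero_add, sub_zero, neg_zero] at hq
          have h2 := mul_nonneg (pow_nonneg ht.le 2) (sub_nonneg.mpr hq)
          ring_nf at h2 ⊢
          linarith)
      linarith
    -- Step 14: a₄ = 0
    have ha4 : a₄ = 0 := by
      apply eqz
      have h4 := poly_high 0 0 (a₁.re) (-(a₄.re^2) - a₄.im^2)
        (a₁.re*a₄.im^2 + a₁.re*a₄.re^2 + 2*(a₄.im*a₄.re*a₅.im) - a₄.im^2*a₅.re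
          - a₄.im^2*b₂.im^2 - a₄.im^2*b₂.re^2 + a₄.re^2*a₅.re - a₄.re^2*b₂.im^2
          - a₄.re^2*b₂.re^2)
        (-((a₄.re^2 + a₄.im^2)^2))
        (fun t ht => by
          have hq := QR (t^2*(a₄.re^2 + a₄.im^2) + 1) 0 (-(t*a₄.re)) (t*a₄.im)
            (by nlinarith)
          simp only [hb3, hb1, hb4, hb5, ha1i, ha2, ha3, Complex.zero_re, Complex.zero_im,
            zero_mul, mul_zero, add_zero, zero_add, sub_zero, neg_zero] at hq
          have h2 := mul_nonneg (pow_nonneg ht.le 3) (sub_nonneg.mpr hq)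
          ring_nf at h2 ⊢
          linarith)
      nlinarith [sq_nonneg (a₄.re^2 + a₄.im^2)]
    -- Step 15: final inequality
    have hfin : ‖b₂‖^2 ≤ a₁.re - ‖a₅‖ := by
      by_cases ha5 : a₅ = 0
      · have hq := Q 1 1 (by simp)
        simp only [ha2, ha3, ha4, ha5, hb1, hb3, hb4, hb5, zero_mul, mul_one, one_pow,
          mul_zero, add_zero, zero_add] at hq
        simpa [ha5] using hq
      · have ha5n : (0:ℝ) < ‖a₅‖ := norm_pos_iff.mpr ha5
        obtain ⟨w, hw⟩ := IsAlgClosed.exists_pow_nat_eq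
          (-((starRingEnd ℂ) a₅) / (‖a₅‖ : ℂ)) (n := 2) (by norm_num)
        have hwn : ‖w‖^2 = 1 := by
          rw [← norm_pow, hw, norm_div, norm_neg]
          simp only [Complex.norm_conj, Complex.norm_real,
            Real.norm_eq_abs]
          rw [abs_of_nonneg (norm_nonneg a₅)]
          exact div_self (norm_ne_zero_iff.mpr ha5)
        have hq := Q 1 w (by rw [hwn, Complex.one_re])
        simp only [ha2, ha3, ha4, hb1, hb3, hb4, hb5, zero_mul, mul_one, one_pow,
          mul_zero, add_zero, zero_add] at hq
        have hkey : (a₁ + a₅ * w^2).re = a₁.re - ‖a₅‖ := by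
          rw [hw, ← mul_div_assoc, mul_neg, Complex.mul_conj]
          have e2 : -((Complex.normSq a₅ : ℝ) : ℂ) / (‖a₅‖ : ℂ) = ((-‖a₅‖ : ℝ) : ℂ) := by
            have hne : ((‖a₅‖ : ℝ) : ℂ) ≠ 0 := by simpa using ha5n.ne'
            rw [div_eq_iff hne]
            norm_cast
            rw [Complex.normSq_eq_norm_sq]
            ring
          rw [e2]
          simp [Complex.add_re, Complex.ofReal_re, sub_eq_add_neg]
        rw [norm_mul, mul_pow, hwn, mul_one, hkey] at hq
        exact hq
    exact ⟨a₁.re, a₅, b₂, ha1pos, hfin, fun z w => by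
      rw [hf]
      have he : ((a₁.re : ℝ) : ℂ) = a₁ := Complex.ext (by simp) (by simp [ha1i])
      rw [he]
      simp [ha2, ha3, ha4, hb1, hb3, hb4, hb5]⟩
  · rintro ⟨A, B, C, hA, hABC, hform⟩ Z hZ
    obtain ⟨z, w⟩ := Z
    have hzw : ‖w‖^2 < z.re := hZ
    rw [hform]
    show ‖C * w‖^2 < ((A : ℂ) * z + B * w^2).re
    have h1 : ((A : ℂ) * z + B * w^2).re = A * z.re + (B * w^2).re := by
      simp [Complex.add_re, Complex.re_ofReal_mul]
    have h2 : -(‖B‖ * ‖w‖^2) ≤ (B * w^2).re := by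
      have := abs_le.mp (Complex.abs_re_le_norm (B * w^2))
      have hn : ‖B * w^2‖ = ‖B‖ * ‖w‖^2 := by
        rw [norm_mul, norm_pow]
      linarith [this.1, hn.le, hn.ge]
    have h3 : ‖C * w‖^2 = ‖C‖^2 * ‖w‖^2 := by rw [norm_mul]; ring
    have h4 : A * ‖w‖^2 ≤ A * z.re := by nlinarith
    rw [h1, h3]
    nlinarith [norm_nonneg w, sq_nonneg (‖w‖), norm_nonneg B]
end
end

section
/- Let H² = {(z,w) ∈ ℂ² : Re z > |w|²} and let f : ℂ² → ℂ², f(z,w) = (2z + w², w). Then: (a) f(H²) ⊆ H²; (b) for every r ∈ ℝ, the point (r², ir) satisfies Re(r²) = |ir|² (it lies on the boundary of H²) and f(r², ir) = (r², ir), so {(r², ir) : r ∈ ℝ} is a curve of boundary fixed points; (c) for every r ∈ ℝ, the map h_r(z,w) = (z + r² + 2irw, w − ir) is a bijection of ℂ² with inverse h_r^{-1}(z,w) = (z + r² − 2irw, w + ir), and h_r ∘ f ∘ h_r^{-1} = f; (d) the liminf of (Re(2z + w²) − |w|²)/(Re z − |w|²) as (z,w) → (0,0) within H² equals 2, i.e.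 the boundary dilatation coefficient of f at the origin is 2. -/
noncomputable section

open Filter Topology

lemma norm_sq_c (w : ℂ) : ‖w‖ ^ 2 = w.re ^ 2 + w.im ^ 2 := by
  rw [Complex.sq_norm, Complex.normSq_apply]; ring

/-- for `f(z,w) = (2z + w², w)`:
(a) `f(H²) ⊆ H²`;
(b) each point `(r², ir)`, `r ∈ ℝ`, lies on `∂H²` and is fixed by `f`;
(c) each translation `h_r(z,w) = (z + r² + 2irw, w − ir)` is a bijection of `ℂ²` with
inverse `h_r⁻¹(z,w) = (z + r² − 2irw, w + ir)` and `h_r ∘ f ∘ h_r⁻¹ = f`;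
(d) the boundary dilatation coefficient of `f` at the origin is `2`. -/
theorem stmt18 (f : ℂ × ℂ → ℂ × ℂ)
    (hf : ∀ z w : ℂ, f (z, w) = (2 * z + w ^ 2, w))
    (h h' : ℝ → ℂ × ℂ → ℂ × ℂ)
    (hh : ∀ (r : ℝ) (z w : ℂ), h r (z, w) =
      (z + ((r ^ 2 : ℝ) : ℂ) + 2 * Complex.I * (r : ℂ) * w, w - Complex.I * (r : ℂ)))
    (hh' : ∀ (r : ℝ) (z w : ℂ), h' r (z, w) =
      (z + ((r ^ 2 : ℝ) : ℂ) - 2 * Complex.I * (r : ℂ) * w, w + Complex.I * (r : ℂ))) :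
    (∀ Z ∈ siegel2, f Z ∈ siegel2) ∧
    (∀ r : ℝ, (((r ^ 2 : ℝ) : ℂ)).re = ‖Complex.I * (r : ℂ)‖ ^ 2 ∧
      f (((r ^ 2 : ℝ) : ℂ), Complex.I * (r : ℂ)) =
        (((r ^ 2 : ℝ) : ℂ), Complex.I * (r : ℂ))) ∧
    (∀ r : ℝ, Function.LeftInverse (h' r) (h r) ∧ Function.RightInverse (h' r) (h r) ∧
      ∀ Y : ℂ × ℂ, h r (f (h' r Y)) = f Y) ∧
    Filter.liminf
      (fun Y : ℂ × ℂ => ((2 * Y.1 + Y.2 ^ 2).re - ‖Y.2‖ ^ 2) / (Y.1.re - ‖Y.2‖ ^ 2))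
      (𝓝[siegel2] 0) = 2 := by
  refine ⟨?_, ?_, ?_, ?_⟩
  · rintro ⟨z, w⟩ hZ
    simp only [siegel2, Set.mem_setOf_eq] at hZ ⊢
    rw [hf]
    simp only [Complex.add_re, Complex.mul_re, Complex.re_ofNat, Complex.im_ofNat]
    have hw : (w ^ 2).re = w.re ^ 2 - w.im ^ 2 := by
      rw [sq, Complex.mul_re]; ring
    rw [hw]
    have := norm_sq_c w
    nlinarith [sq_nonneg w.re, sq_nonneg w.im]
  · intro r
    constructor
    · rw [norm_sq_c]
      simp [Complex.mul_re, Complex.mul_im, ← Complex.ofReal_pow]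
    · rw [hf]
      refine Prod.ext ?_ rfl
      push_cast
      linear_combination Complex.I_sq * (r : ℂ) ^ 2
  · intro r
    refine ⟨?_, ?_, ?_⟩
    · rintro ⟨z, w⟩
      rw [hh, hh', Prod.mk.injEq]
      refine ⟨?_, by ring⟩
      push_cast
      linear_combination (2 * (r : ℂ) ^ 2) * Complex.I_sq
    · rintro ⟨z, w⟩
      rw [hh', hh, Prod.mk.injEq]
      refine ⟨?_, by ring⟩
      push_cast
      linear_combination (2 * (r : ℂ) ^ 2) * Complex.I_sq
    · rintro ⟨z, w⟩
      rw [hh', hf, hh, hf, Prod.mk.injEq]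
      refine ⟨?_, by ring⟩
      push_cast
      linear_combination (3 * (r : ℂ) ^ 2) * Complex.I_sq
  · set g : ℂ × ℂ → ℝ :=
      fun Y => ((2 * Y.1 + Y.2 ^ 2).re - ‖Y.2‖ ^ 2) / (Y.1.re - ‖Y.2‖ ^ 2) with hg
    have hge : ∀ Y ∈ siegel2, 2 ≤ g Y := by
      rintro ⟨z, w⟩ hZ
      simp only [siegel2, Set.mem_setOf_eq] at hZ
      have hd : (0 : ℝ) < z.re - ‖w‖ ^ 2 := by linarith
      rw [hg]
      rw [le_div_iff₀ hd]
      have hw : (w ^ 2).re = w.re ^ 2 - w.im ^ 2 := by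
        rw [sq, Complex.mul_re]; ring
      simp only [Complex.add_re, Complex.mul_re, hw, Complex.re_ofNat, Complex.im_ofNat]
      have := norm_sq_c w
      nlinarith [sq_nonneg w.re]
    have hev : ∀ᶠ Y in 𝓝[siegel2] (0 : ℂ × ℂ), 2 ≤ g Y :=
      eventually_nhdsWithin_of_forall hge
    -- a curve along which g = 2
    have htend : Tendsto (fun t : ℝ => (((t : ℂ), (0 : ℂ)) : ℂ × ℂ)) (𝓝[>] (0 : ℝ))
        (𝓝[siegel2] (0 : ℂ × ℂ)) := by
      apply tendsto_nhdsWithin_of_tendsto_nhds_of_eventually_within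
      · have : Tendsto (fun t : ℝ => ((t : ℂ), (0 : ℂ))) (𝓝 (0 : ℝ)) (𝓝 ((0 : ℂ), (0 : ℂ))) :=
          (Complex.continuous_ofReal.tendsto 0).prodMk_nhds tendsto_const_nhds
        exact this.mono_left nhdsWithin_le_nhds
      · filter_upwards [self_mem_nhdsWithin] with t ht
        simp only [siegel2, Set.mem_setOf_eq, norm_zero]
        simpa using ht
    have h2 : ∀ᶠ t : ℝ in 𝓝[>] (0 : ℝ), g (((t : ℂ), (0 : ℂ)) : ℂ × ℂ) = 2 := by
      filter_upwards [self_mem_nhdsWithin] with t ht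
      have ht0 : t ≠ 0 := ne_of_gt (Set.mem_Ioi.mp ht)
      simp only [hg]
      simp [Complex.mul_re, mul_div_assoc, div_self ht0]
    have hfreq : ∃ᶠ Y in 𝓝[siegel2] (0 : ℂ × ℂ), g Y ≤ 2 :=
      htend.frequently ((h2.mono fun t ht => ht.le).frequently)
    have hbdd : IsBoundedUnder (· ≥ ·) (𝓝[siegel2] (0 : ℂ × ℂ)) g := ⟨2, by
      simpa using hev⟩
    have hcob : IsCoboundedUnder (· ≥ ·) (𝓝[siegel2] (0 : ℂ × ℂ)) g :=
      IsCoboundedUnder.of_frequently_le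
        (htend.frequently ((h2.mono fun t ht => ht.le).frequently))
    exact le_antisymm (liminf_le_of_frequently_le hfreq hbdd) (le_liminf_of_le hcob hev)
end
end
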